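/- Let (V, h) be a finite-dimensional real inner product space with norm ‖·‖ and let W ∈ V with ‖W‖ > 1 (strong wind). Then for every v ∈ V ∖ {0}: the set S(v) := {r > 0 : ‖v/r − W‖ = 1} is nonempty if and only if ⟨W, v⟩ > 0 and ⟨W, v⟩² ≥ (‖W‖² − 1)·‖v‖²; moreover S(v) has exactly two elements if ⟨W, v⟩ > 0 and ⟨W, v⟩² > (‖W‖² − 1)·‖v‖², and exactly one element if ⟨W, v⟩ > 0 and ⟨W, v⟩² = (‖W‖² − 1)·‖v‖². -/

import Mathlib

/-- Strong wind `‖W‖ > 1`: for `v ≠ 0`, the set `S(v) = {r > 0 : ‖v/r − W‖ = 1}` is nonempty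
iff `⟨W,v⟩ > 0` and `⟨W,v⟩² ≥ (‖W‖² − 1)‖v‖²`; it has exactly two elements when the
inequality is strict, and exactly one element in the equality case. -/
theorem stmt3 {V : Type*} [NormedAddCommGroup V] [InnerProductSpace ℝ V]
    [FiniteDimensional ℝ V] (W : V) (hW : 1 < ‖W‖) :
    ∀ v : V, v ≠ 0 →
      (({r : ℝ | 0 < r ∧ ‖r⁻¹ • v - W‖ = 1}.Nonempty) ↔
        (0 < (inner ℝ W v : ℝ) ∧ (‖W‖ ^ 2 - 1) * ‖v‖ ^ 2 ≤ (inner ℝ W v : ℝ) ^ 2)) ∧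
      (0 < (inner ℝ W v : ℝ) → (‖W‖ ^ 2 - 1) * ‖v‖ ^ 2 < (inner ℝ W v : ℝ) ^ 2 →
        {r : ℝ | 0 < r ∧ ‖r⁻¹ • v - W‖ = 1}.encard = 2) ∧
      (0 < (inner ℝ W v : ℝ) → (inner ℝ W v : ℝ) ^ 2 = (‖W‖ ^ 2 - 1) * ‖v‖ ^ 2 →
        {r : ℝ | 0 < r ∧ ‖r⁻¹ • v - W‖ = 1}.encard = 1) := by
  intro v hv
  have hcomm : (inner ℝ v W : ℝ) = inner ℝ W v := real_inner_comm W v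
  set a : ℝ := ‖v‖ ^ 2 with ha_def
  set b : ℝ := inner ℝ W v with hb_def
  set c : ℝ := ‖W‖ ^ 2 - 1 with hc_def
  have ha : 0 < a := by
    have h0 : 0 < ‖v‖ := norm_pos_iff.mpr hv
    positivity
  have hc : 0 < c := by
    have h0 : 0 < ‖W‖ := lt_trans one_pos hW
    simp only [hc_def]
    nlinarith
  -- the quadratic characterization
  have key : ∀ r : ℝ, 0 < r →
      (‖r⁻¹ • v - W‖ = 1 ↔ a * r⁻¹ ^ 2 - 2 * b * r⁻¹ + c = 0) := by
    intro r hr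
    have h1 : ‖r⁻¹ • v - W‖ = 1 ↔ ‖r⁻¹ • v - W‖ ^ 2 = 1 := by
      constructor
      · intro h; rw [h]; ring
      · intro h; nlinarith [norm_nonneg (r⁻¹ • v - W)]
    rw [h1, norm_sub_sq_real, norm_smul, real_inner_smul_left, hcomm]
    have hnr : ‖r⁻¹‖ = r⁻¹ := by
      rw [Real.norm_eq_abs, abs_of_pos (by positivity)]
    rw [hnr]
    constructor <;> intro h <;> linear_combination h
  -- membership characterization
  have mem : ∀ r : ℝ, (r ∈ {r : ℝ | 0 < r ∧ ‖r⁻¹ • v - W‖ = 1}) ↔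
      (0 < r ∧ a * r⁻¹ ^ 2 - 2 * b * r⁻¹ + c = 0) := by
    intro r
    simp only [Set.mem_setOf_eq]
    exact and_congr_right fun hr => key r hr
  -- necessity: a solution forces b > 0 and a*c ≤ b^2
  have nec : ∀ r : ℝ, 0 < r → a * r⁻¹ ^ 2 - 2 * b * r⁻¹ + c = 0 →
      0 < b ∧ c * a ≤ b ^ 2 := by
    intro r hr hQ
    set t : ℝ := r⁻¹ with ht_def
    have ht : 0 < t := inv_pos.mpr hr
    have hb : 0 < b := by nlinarith [mul_pos ha (mul_pos ht ht)]
    refine ⟨hb, ?_⟩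
    have h2 : 2 * b * t = a * t ^ 2 + c := by linarith
    have h3 : (2 * b * t) ^ 2 = (a * t ^ 2 + c) ^ 2 := by rw [h2]
    nlinarith [sq_nonneg (a * t ^ 2 - c), mul_pos ht ht]
  -- solution description assuming b > 0 and a*c ≤ b^2
  have sols : ∀ (hb : 0 < b) (hle : c * a ≤ b ^ 2),
      {r : ℝ | 0 < r ∧ ‖r⁻¹ • v - W‖ = 1}
        = {((b - Real.sqrt (b ^ 2 - a * c)) / a)⁻¹,
           ((b + Real.sqrt (b ^ 2 - a * c)) / a)⁻¹} := by
    intro hb hle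
    set d : ℝ := Real.sqrt (b ^ 2 - a * c) with hd_def
    have hd0 : 0 ≤ d := Real.sqrt_nonneg _
    have hd2 : d ^ 2 = b ^ 2 - a * c := Real.sq_sqrt (by nlinarith)
    have hdb : d < b := by nlinarith [mul_pos ha hc]
    have ht1 : 0 < (b - d) / a := div_pos (by linarith) ha
    have ht2 : 0 < (b + d) / a := div_pos (by linarith) ha
    have factor : ∀ t : ℝ, a * t ^ 2 - 2 * b * t + c
        = a * (t - (b - d) / a) * (t - (b + d) / a) := by
      intro t
      field_simp
      linear_combination hd2
    ext r
    rw [mem r]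
    simp only [Set.mem_insert_iff, Set.mem_singleton_iff]
    constructor
    · rintro ⟨hr, hQ⟩
      rw [factor] at hQ
      rcases mul_eq_zero.mp hQ with h | h
      · rcases mul_eq_zero.mp h with h | h
        · exact absurd h ha.ne'
        · left
          have : r⁻¹ = (b - d) / a := by linarith [sub_eq_zero.mp h]
          rw [← this, inv_inv]
      · right
        have : r⁻¹ = (b + d) / a := by linarith [sub_eq_zero.mp h]
        rw [← this, inv_inv]
    · rintro (h | h)
      · refine ⟨h ▸ inv_pos.mpr ht1, ?_⟩
        rw [factor, h, inv_inv]
        ring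
      · refine ⟨h ▸ inv_pos.mpr ht2, ?_⟩
        rw [factor, h, inv_inv]
        ring
  refine ⟨?_, ?_, ?_⟩
  · constructor
    · rintro ⟨r, hr⟩
      rw [mem r] at hr
      exact nec r hr.1 hr.2
    · rintro ⟨hb, hle⟩
      refine ⟨((b + Real.sqrt (b ^ 2 - a * c)) / a)⁻¹, ?_⟩
      rw [sols hb hle]
      simp
  · intro hb hlt
    have hd2 : (Real.sqrt (b ^ 2 - a * c)) ^ 2 = b ^ 2 - a * c :=
      Real.sq_sqrt (by nlinarith)
    have hd0 : 0 < Real.sqrt (b ^ 2 - a * c) := Real.sqrt_pos.mpr (by nlinarith)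
    have hdb : Real.sqrt (b ^ 2 - a * c) < b := by nlinarith [mul_pos ha hc]
    rw [sols hb (le_of_lt (by nlinarith))]
    refine Set.encard_pair ?_
    set d : ℝ := Real.sqrt (b ^ 2 - a * c)
    intro h
    rw [inv_inj, div_eq_div_iff ha.ne' ha.ne'] at h
    nlinarith [mul_pos hd0 ha]
  · intro hb heq
    have hd0 : Real.sqrt (b ^ 2 - a * c) = 0 := by
      rw [Real.sqrt_eq_zero']
      nlinarith
    rw [sols hb (by nlinarith)]
    rw [hd0]
    simp
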